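/- arXiv:1509.02897 — 2 statements merged into one kernel-verified Lean document; each statement's English description precedes it below -/
import Mathlib

section
/- There is a universal constant c > 0 with the following property. Let K ⊆ ℝ² be the complement of an open convex subset of the plane that is symmetric about the origin, and let Δ_K = inf{r > 0 : μ_K(r) > 0}, where μ_K(r) = μ(K ∩ rS¹)/(2πr) with μ the arc-length measure. Then for every 0 < ε < 1/3: c · ε^{1/2} · e^{−(1+ε)·Δ_K²/2} ≤ 𝒢(K) ≤ e^{−Δ_K²/2}, where 𝒢 is the standard Gaussian measure on ℝ². -/
open MeasureTheory ProbabilityTheory Real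

noncomputable section

/-- The standard Gaussian measure `𝒢` on `ℝ²` (product of two standard Gaussians). -/
def gauss2 : Measure (ℝ × ℝ) := (gaussianReal 0 1).prod (gaussianReal 0 1)

/-- `μ_A(r)`: the normalized arc-length measure of `A ∩ rS¹`, i.e. the fraction of the circle
of radius `r` centered at the origin lying in `A`. -/
def circFrac (A : Set (ℝ × ℝ)) (r : ℝ) : ℝ :=
  (volume {θ : ℝ | θ ∈ Set.Ico 0 (2 * π) ∧ (r * Real.cos θ, r * Real.sin θ) ∈ A}).toReal
    / (2 * π)

/-- The set `{r > 0 : μ_A(r) > 0}` whose infimum is the essential distance `Δ_A`. -/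
def essDistSet (A : Set (ℝ × ℝ)) : Set ℝ := {r : ℝ | 0 < r ∧ 0 < circFrac A r}

/-- `e^{-c·Δ_A²}` expressed as `sup {e^{-c·r²} : r ∈ {r > 0 : μ_A(r) > 0}}`; this agrees with
`exp (-c * (inf {r > 0 : μ_A(r) > 0})²)` whenever the set is nonempty, and is `0` (the value
corresponding to `Δ_A = ∞`) when the set is empty. -/
def expNegDistSq (A : Set (ℝ × ℝ)) (c : ℝ) : ℝ :=
  sSup ((fun r => Real.exp (-(c * r ^ 2))) '' essDistSet A)

section Aux
open Set Filter Topology ENNReal NNReal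




lemma pdf_prod_eq (u v : ℝ) :
    gaussianPDFReal 0 1 u * gaussianPDFReal 0 1 v
      = (2 * π)⁻¹ * Real.exp (-(u ^ 2 + v ^ 2) / 2) := by
  have hs : Real.sqrt (2 * π) * Real.sqrt (2 * π) = 2 * π :=
    Real.mul_self_sqrt (by positivity)
  simp only [gaussianPDFReal, NNReal.coe_one, mul_one, sub_zero]
  rw [show -(u ^ 2 + v ^ 2) / 2 = -u ^ 2 / 2 + -v ^ 2 / 2 by ring, Real.exp_add,
    show ((2 * π)⁻¹ : ℝ) = (√(2 * π))⁻¹ * (√(2 * π))⁻¹ by rw [← mul_inv, hs]]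
  ring

lemma gauss2_eq_withDensity :
    gauss2 = (volume.prod volume).withDensity
      (fun p => gaussianPDF 0 1 p.1 * gaussianPDF 0 1 p.2) := by
  rw [gauss2]
  refine Measure.prod_eq fun s t hs ht => ?_
  rw [withDensity_apply _ (hs.prod ht), ← Measure.prod_restrict,
    lintegral_prod_mul ((measurable_gaussianPDF 0 1).aemeasurable)
      ((measurable_gaussianPDF 0 1).aemeasurable),
    gaussianReal_apply 0 one_ne_zero s, gaussianReal_apply 0 one_ne_zero t]

lemma integrable_pdf2 : Integrable
    (fun p : ℝ × ℝ => gaussianPDFReal 0 1 p.1 * gaussianPDFReal 0 1 p.2)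
    (volume.prod volume) :=
  (integrable_gaussianPDFReal 0 1).mul_prod (integrable_gaussianPDFReal 0 1)

lemma gauss2_apply_toReal {S : Set (ℝ × ℝ)} (hS : MeasurableSet S) :
    (gauss2 S).toReal
      = ∫ p in S, gaussianPDFReal 0 1 p.1 * gaussianPDFReal 0 1 p.2
          ∂(volume.prod volume) := by
  rw [gauss2_eq_withDensity, withDensity_apply _ hS]
  have : ∀ p : ℝ × ℝ, gaussianPDF 0 1 p.1 * gaussianPDF 0 1 p.2
      = ENNReal.ofReal (gaussianPDFReal 0 1 p.1 * gaussianPDFReal 0 1 p.2) := by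
    intro p
    rw [gaussianPDF, gaussianPDF, ← ENNReal.ofReal_mul (gaussianPDFReal_nonneg 0 1 _)]
  simp_rw [this]
  rw [← ofReal_integral_eq_lintegral_ofReal (integrable_pdf2.restrict)
    (ae_of_all _ fun p => mul_nonneg (gaussianPDFReal_nonneg 0 1 _) (gaussianPDFReal_nonneg 0 1 _)),
    ENNReal.toReal_ofReal]
  exact setIntegral_nonneg hS fun p _ =>
    mul_nonneg (gaussianPDFReal_nonneg 0 1 _) (gaussianPDFReal_nonneg 0 1 _)

lemma integrable_mul_exp : Integrable (fun x : ℝ => x * Real.exp (-x ^ 2 / 2)) := by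
  have h := integrable_rpow_mul_exp_neg_mul_sq (by norm_num : (0:ℝ) < 2⁻¹)
    (by norm_num : (-1:ℝ) < 1)
  refine h.congr (ae_of_all _ fun x => ?_)
  simp only [Real.rpow_one]
  congr 1
  ring

lemma radial_int (Δ : ℝ) :
    ∫ r in Ioi Δ, r * Real.exp (-r ^ 2 / 2) = Real.exp (-Δ ^ 2 / 2) := by
  have hderiv : ∀ x ∈ Ioi Δ, HasDerivAt (fun r : ℝ => -Real.exp (-r ^ 2 / 2))
      (x * Real.exp (-x ^ 2 / 2)) x := by
    intro x _
    have h1 : HasDerivAt (fun r : ℝ => -r ^ 2 / 2) (-x) x := by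
      have := ((hasDerivAt_pow 2 x).neg.div_const 2)
      refine this.congr_deriv ?_
      simp
      ring
    have h2 := h1.exp
    refine h2.neg.congr_deriv ?_
    ring
  have hf : Tendsto (fun r : ℝ => -Real.exp (-r ^ 2 / 2)) atTop (𝓝 0) := by
    have h1 : Tendsto (fun r : ℝ => r ^ 2 / 2) atTop atTop :=
      (tendsto_pow_atTop (by norm_num : 2 ≠ 0)).atTop_div_const (by norm_num)
    have h2 := (Real.tendsto_exp_neg_atTop_nhds_zero.comp h1).neg
    simp only [Function.comp_def, neg_zero] at h2
    convert h2 using 2 with r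
    ring_nf
  have := integral_Ioi_of_hasDerivAt_of_tendsto
    (Continuous.continuousWithinAt (by continuity))
    hderiv (integrable_mul_exp.integrableOn) hf
  rw [this]
  simp

lemma gauss2_compl_ball {Δ : ℝ} (hΔ : 0 ≤ Δ) :
    (gauss2 {q : ℝ × ℝ | Δ ^ 2 ≤ q.1 ^ 2 + q.2 ^ 2}).toReal = Real.exp (-Δ ^ 2 / 2) := by
  have hS : MeasurableSet {q : ℝ × ℝ | Δ ^ 2 ≤ q.1 ^ 2 + q.2 ^ 2} :=
    (isClosed_le continuous_const ((continuous_fst.pow 2).add (continuous_snd.pow 2))).measurableSet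
  rw [gauss2_apply_toReal hS, ← Measure.volume_eq_prod, ← integral_indicator hS,
    ← integral_comp_polarCoord_symm]
  have hcongr : ∀ p ∈ polarCoord.target,
      p.1 • Set.indicator {q : ℝ × ℝ | Δ ^ 2 ≤ q.1 ^ 2 + q.2 ^ 2}
        (fun q => gaussianPDFReal 0 1 q.1 * gaussianPDFReal 0 1 q.2) (polarCoord.symm p)
      = (Set.indicator (Ici Δ) (fun r => r * ((2 * π)⁻¹ * Real.exp (-r ^ 2 / 2))) p.1)
          * (fun _ : ℝ => (1:ℝ)) p.2 := by
    rintro ⟨r, θ⟩ hp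
    simp only [polarCoord_target, mem_prod, mem_Ioi, mem_Ioo] at hp
    have hr : 0 < r := hp.1
    have hsq : (r * Real.cos θ) ^ 2 + (r * Real.sin θ) ^ 2 = r ^ 2 := by
      have := Real.sin_sq_add_cos_sq θ
      nlinarith
    have hiff : Δ ^ 2 ≤ r ^ 2 ↔ Δ ≤ r := by
      constructor
      · intro h
        nlinarith
      · intro h
        nlinarith
    rw [polarCoord_symm_apply]
    by_cases h : Δ ≤ r
    · have hmem : ((r * Real.cos θ, r * Real.sin θ) : ℝ × ℝ)
          ∈ {q : ℝ × ℝ | Δ ^ 2 ≤ q.1 ^ 2 + q.2 ^ 2} := by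
        simp only [mem_setOf_eq]
        rw [hsq]
        exact hiff.2 h
      rw [Set.indicator_of_mem hmem, Set.indicator_of_mem (mem_Ici.2 h), pdf_prod_eq]
      simp only [smul_eq_mul]
      rw [hsq]
      ring
    · have hmem : ((r * Real.cos θ, r * Real.sin θ) : ℝ × ℝ)
          ∉ {q : ℝ × ℝ | Δ ^ 2 ≤ q.1 ^ 2 + q.2 ^ 2} := by
        simp only [mem_setOf_eq]
        rw [hsq]
        exact fun c => h (hiff.1 c)
      rw [Set.indicator_of_notMem hmem, Set.indicator_of_notMem (by simpa using h)]
      simp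
  rw [setIntegral_congr_fun (polarCoord.open_target.measurableSet) hcongr]
  rw [polarCoord_target, Measure.volume_eq_prod, ← Measure.prod_restrict,
    integral_prod_mul (f := Set.indicator (Ici Δ) (fun r => r * ((2 * π)⁻¹ * Real.exp (-r ^ 2 / 2))))
      (g := fun _ : ℝ => (1:ℝ))]
  have h2 : ∫ _ in Ioo (-π) π, (1:ℝ) = 2 * π := by
    simp [Real.volume_Ioo]
    rw [max_eq_left (by positivity)]
    ring
  have hae : (Ioi (0:ℝ) ∩ Ici Δ : Set ℝ) =ᵐ[volume] Ioi Δ := by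
    rw [Filter.eventuallyEq_set, ae_iff]
    refine measure_mono_null (fun x hx => ?_) (Real.volume_singleton (a := Δ))
    simp only [mem_setOf_eq, mem_inter_iff, mem_Ioi, mem_Ici] at hx
    simp only [mem_singleton_iff]
    by_contra hne
    rcases lt_or_gt_of_ne hne with h | h
    · exact hx (iff_of_false (fun c => absurd c.2 (not_le.2 h)) (not_lt.2 h.le))
    · exact hx (iff_of_true ⟨lt_of_le_of_lt hΔ h, h.le⟩ h)
  have h1 : ∫ r in Ioi (0:ℝ),
      Set.indicator (Ici Δ) (fun r => r * ((2 * π)⁻¹ * Real.exp (-r ^ 2 / 2))) r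
      = (2 * π)⁻¹ * Real.exp (-Δ ^ 2 / 2) := by
    rw [setIntegral_indicator measurableSet_Ici, setIntegral_congr_set hae]
    rw [show (fun r : ℝ => r * ((2 * π)⁻¹ * Real.exp (-r ^ 2 / 2)))
        = fun r : ℝ => (2 * π)⁻¹ * (r * Real.exp (-r ^ 2 / 2)) by funext r; ring]
    rw [integral_const_mul]
    rw [radial_int]
  rw [h1, h2]
  field_simp

lemma sq_rot (a b x1 x2 : ℝ) (hab : a ^ 2 + b ^ 2 = 1) :
    (a * x1 + -b * x2) ^ 2 + (b * x1 + a * x2) ^ 2 = x1 ^ 2 + x2 ^ 2 := by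
  linear_combination (x1 ^ 2 + x2 ^ 2) * hab

lemma Dprod_eq {u v u' v' : ℝ} (h : u ^ 2 + v ^ 2 = u' ^ 2 + v' ^ 2) :
    gaussianPDF 0 1 u * gaussianPDF 0 1 v = gaussianPDF 0 1 u' * gaussianPDF 0 1 v' := by
  simp only [gaussianPDF]
  rw [← ENNReal.ofReal_mul (gaussianPDFReal_nonneg 0 1 _),
    ← ENNReal.ofReal_mul (gaussianPDFReal_nonneg 0 1 _), pdf_prod_eq, pdf_prod_eq, h]

lemma gauss2_halfplane {a b s : ℝ} (hab : a ^ 2 + b ^ 2 = 1) :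
    gauss2 {p : ℝ × ℝ | s ≤ a * p.1 + b * p.2} = gaussianReal 0 1 {x : ℝ | s ≤ x} := by
  have hSmeas : MeasurableSet {p : ℝ × ℝ | s ≤ a * p.1 + b * p.2} :=
    (isClosed_le continuous_const
      ((continuous_const.mul continuous_fst).add (continuous_const.mul continuous_snd))).measurableSet
  have hXmeas : MeasurableSet {p : ℝ × ℝ | s ≤ p.1} :=
    (isClosed_le continuous_const continuous_fst).measurableSet
  set T := Matrix.toLin (Module.Basis.finTwoProd ℝ) (Module.Basis.finTwoProd ℝ) !![a, -b; b, a] with hTdef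
  have hT : ∀ x : ℝ × ℝ, T x = (a * x.1 + -b * x.2, b * x.1 + a * x.2) := fun x =>
    Matrix.toLin_finTwoProd_apply a (-b) b a x
  have hdet : LinearMap.det T = 1 := by
    rw [hTdef, LinearMap.det_toLin, Matrix.det_fin_two_of]
    nlinarith [hab]
  have hmeasT : Measurable T := T.continuous_of_finiteDimensional.measurable
  have hmp : MeasurePreserving T (volume : Measure (ℝ × ℝ)) volume := by
    refine ⟨hmeasT, ?_⟩
    rw [Measure.map_linearMap_addHaar_eq_smul_addHaar volume (by rw [hdet]; norm_num), hdet]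
    simp
  set D : ℝ × ℝ → ℝ≥0∞ := fun p => gaussianPDF 0 1 p.1 * gaussianPDF 0 1 p.2 with hDdef
  have hDmeas : Measurable D :=
    ((measurable_gaussianPDF 0 1).comp measurable_fst).mul
      ((measurable_gaussianPDF 0 1).comp measurable_snd)
  have key : ∫⁻ p in {p : ℝ × ℝ | s ≤ a * p.1 + b * p.2}, D p
      = ∫⁻ p in {p : ℝ × ℝ | s ≤ p.1}, D p := by
    rw [← lintegral_indicator hSmeas, ← lintegral_indicator hXmeas]
    rw [← hmp.lintegral_comp (hDmeas.indicator hSmeas)]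
    congr 1
    funext p
    have hval : a * (T p).1 + b * (T p).2 = p.1 := by
      rw [hT]
      dsimp only
      linear_combination p.1 * hab
    have hDT : D (T p) = D p := by
      rw [hDdef]
      dsimp only
      rw [hT]
      exact Dprod_eq (sq_rot a b p.1 p.2 hab)
    by_cases h : s ≤ p.1
    · rw [Set.indicator_of_mem (by simp only [mem_setOf_eq, hval]; exact h),
        Set.indicator_of_mem (by simpa using h), hDT]
    · rw [Set.indicator_of_notMem (by simp only [mem_setOf_eq, hval]; exact h),
        Set.indicator_of_notMem (by simpa using h)]
  have h2 : gauss2 {p : ℝ × ℝ | s ≤ p.1} = gaussianReal 0 1 {x : ℝ | s ≤ x} := by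
    have : {p : ℝ × ℝ | s ≤ p.1} = {x : ℝ | s ≤ x} ×ˢ (univ : Set ℝ) := by
      ext p; simp [Set.mem_prod]
    rw [gauss2, this, Measure.prod_prod, measure_univ, mul_one]
  rw [← h2, gauss2_eq_withDensity, withDensity_apply _ hSmeas,
    withDensity_apply _ hXmeas, ← Measure.volume_eq_prod]
  exact key

lemma pdf_mono {x y : ℝ} (hx : 0 ≤ x) (hxy : x ≤ y) :
    gaussianPDFReal 0 1 y ≤ gaussianPDFReal 0 1 x := by
  simp only [gaussianPDFReal, NNReal.coe_one, mul_one, sub_zero]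
  refine mul_le_mul_of_nonneg_left (Real.exp_le_exp.2 ?_) (inv_nonneg.2 (Real.sqrt_nonneg _))
  nlinarith

lemma tail_lb {s ε : ℝ} (hs : 0 < s) (hε : 0 < ε) (hε3 : ε < 1 / 3) :
    Real.exp (-2/3) / Real.sqrt (2 * π) * Real.sqrt ε * Real.exp (-((1 + ε) / 2 * s ^ 2))
      ≤ (gaussianReal 0 1 {x : ℝ | s ≤ x}).toReal := by
  have hset : {x : ℝ | s ≤ x} = Ici s := rfl
  rw [gaussianReal_apply_eq_integral 0 one_ne_zero, ENNReal.toReal_ofReal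
    (setIntegral_nonneg (by rw [hset]; exact measurableSet_Ici)
      (fun x _ => gaussianPDFReal_nonneg 0 1 x))]
  have hsqε : (0:ℝ) ≤ Real.sqrt ε := Real.sqrt_nonneg ε
  have h1 : ∫ x in Ioc s (s + Real.sqrt ε), gaussianPDFReal 0 1 x
      ≤ ∫ x in {x : ℝ | s ≤ x}, gaussianPDFReal 0 1 x := by
    refine setIntegral_mono_set (integrable_gaussianPDFReal 0 1).integrableOn
      (ae_restrict_of_ae (ae_of_all _ (gaussianPDFReal_nonneg 0 1))) ?_
    rw [hset]
    exact HasSubset.Subset.eventuallyLE (fun x hx => hx.1.le)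
  have h2 : Real.sqrt ε * gaussianPDFReal 0 1 (s + Real.sqrt ε)
      ≤ ∫ x in Ioc s (s + Real.sqrt ε), gaussianPDFReal 0 1 x := by
    have hc : ∫ _ in Ioc s (s + Real.sqrt ε), gaussianPDFReal 0 1 (s + Real.sqrt ε)
        = Real.sqrt ε * gaussianPDFReal 0 1 (s + Real.sqrt ε) := by
      rw [setIntegral_const, Real.volume_real_Ioc, smul_eq_mul]
      congr 1
      rw [max_eq_left (by linarith)]
      ring
    rw [← hc]
    refine setIntegral_mono_on (integrableOn_const measure_Ioc_lt_top.ne)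
      (integrable_gaussianPDFReal 0 1).integrableOn measurableSet_Ioc ?_
    intro x hx
    exact pdf_mono (le_of_lt (lt_of_le_of_lt hs.le hx.1)) hx.2
  have h3 : Real.exp (-2/3) / Real.sqrt (2 * π) * Real.sqrt ε * Real.exp (-((1 + ε) / 2 * s ^ 2))
      ≤ Real.sqrt ε * gaussianPDFReal 0 1 (s + Real.sqrt ε) := by
    have hstep : Real.exp (-2/3) / Real.sqrt (2 * π) * Real.exp (-((1 + ε) / 2 * s ^ 2))
        ≤ gaussianPDFReal 0 1 (s + Real.sqrt ε) := by
      simp only [gaussianPDFReal, NNReal.coe_one, mul_one, sub_zero]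
      rw [div_eq_mul_inv, mul_comm (Real.exp (-2/3)) _, mul_assoc, ← Real.exp_add]
      refine mul_le_mul_of_nonneg_left (Real.exp_le_exp.2 ?_) (inv_nonneg.2 (Real.sqrt_nonneg _))
      have h1 : (Real.sqrt ε) ^ 2 = ε := Real.sq_sqrt hε.le
      nlinarith [sq_nonneg (Real.sqrt ε * s - 1)]
    calc Real.exp (-2/3) / Real.sqrt (2 * π) * Real.sqrt ε * Real.exp (-((1 + ε) / 2 * s ^ 2))
        = Real.sqrt ε * (Real.exp (-2/3) / Real.sqrt (2 * π)
            * Real.exp (-((1 + ε) / 2 * s ^ 2))) := by ring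
      _ ≤ Real.sqrt ε * gaussianPDFReal 0 1 (s + Real.sqrt ε) :=
          mul_le_mul_of_nonneg_left hstep hsqε
  linarith

lemma sSup_image_exp {S : Set ℝ} {Δ c' : ℝ} (hΔ : 0 ≤ Δ) (hc' : 0 < c')
    (h1 : ∀ r ∈ S, Δ ≤ r) (h2 : ∀ r, Δ < r → r ∈ S) :
    sSup ((fun r => Real.exp (-(c' * r ^ 2))) '' S) = Real.exp (-(c' * Δ ^ 2)) := by
  have hc : Continuous fun x : ℝ => Real.exp (-(c' * x ^ 2)) := by continuity
  have h0 : Tendsto (fun n : ℕ => Δ + 1 / ((n : ℝ) + 1)) atTop (𝓝 Δ) := by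
    have := tendsto_one_div_add_atTop_nhds_zero_nat (𝕜 := ℝ)
    simpa using (tendsto_const_nhds (x := Δ) (f := atTop)).add this
  have hlub : IsLUB ((fun r => Real.exp (-(c' * r ^ 2))) '' S) (Real.exp (-(c' * Δ ^ 2))) := by
    constructor
    · rintro x ⟨r, hr, rfl⟩
      have hΔr := h1 r hr
      have hsq : Δ ^ 2 ≤ r ^ 2 := pow_le_pow_left₀ hΔ hΔr 2
      have := mul_le_mul_of_nonneg_left hsq hc'.le
      exact Real.exp_le_exp.2 (by linarith)
    · intro b hb
      have hseq : ∀ n : ℕ, Real.exp (-(c' * (Δ + 1 / ((n : ℝ) + 1)) ^ 2)) ≤ b := fun n =>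
        hb ⟨Δ + 1 / ((n : ℝ) + 1), h2 _ (lt_add_of_pos_right Δ (by positivity)), rfl⟩
      exact le_of_tendsto ((hc.tendsto Δ).comp h0) (Filter.Eventually.of_forall hseq)
  exact hlub.csSup_eq ⟨_, ⟨Δ + 1, h2 _ (by linarith), rfl⟩⟩


lemma circFrac_pos {K : Set (ℝ × ℝ)} {a b s r : ℝ} (hab : a ^ 2 + b ^ 2 = 1)
    (hsr : s < r) (hsub : {p : ℝ × ℝ | s ≤ a * p.1 + b * p.2} ⊆ K) (hr : 0 < r) :
    0 < circFrac K r := by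
  obtain ⟨θ₀, hθ₀mem, hθ₀⟩ : ∃ θ₀, θ₀ ∈ Ico 0 (2 * π)
      ∧ a * Real.cos θ₀ + b * Real.sin θ₀ = 1 := by
    set z : ℂ := Complex.ofReal a + Complex.ofReal b * Complex.I with hz
    have habs : ‖z‖ = 1 := by
      rw [Complex.norm_def, hz, Complex.normSq_add_mul_I]
      rw [hab]
      exact Real.sqrt_one
    have hzne : z ≠ 0 := by
      intro h
      rw [h] at habs
      simp at habs
    have hcos : Real.cos z.arg = a := by
      rw [Complex.cos_arg hzne, habs]
      simp [hz]
    have hsin : Real.sin z.arg = b := by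
      rw [Complex.sin_arg, habs]
      simp [hz]
    have harg1 : -π < z.arg := Complex.neg_pi_lt_arg z
    have harg2 : z.arg ≤ π := Complex.arg_le_pi z
    by_cases h : 0 ≤ z.arg
    · exact ⟨z.arg, ⟨h, by nlinarith [Real.pi_pos]⟩, by rw [hcos, hsin]; nlinarith⟩
    · refine ⟨z.arg + 2 * π, ⟨by nlinarith [Real.pi_pos], by nlinarith [Real.pi_pos]⟩, ?_⟩
      rw [Real.cos_add_two_pi, Real.sin_add_two_pi, hcos, hsin]
      nlinarith
  have hθ₀W : s < r * (a * Real.cos θ₀ + b * Real.sin θ₀) := by rw [hθ₀]; simpa using hsr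
  have hWopen : IsOpen {θ : ℝ | s < r * (a * Real.cos θ + b * Real.sin θ)} :=
    isOpen_lt continuous_const (by continuity)
  obtain ⟨δ, hδpos, hball⟩ := Metric.isOpen_iff.1 hWopen θ₀ hθ₀W
  set δ' := min δ (2 * π - θ₀) with hδ'def
  have hδ'pos : 0 < δ' := lt_min hδpos (by linarith [hθ₀mem.2])
  have hsubA : Ioo θ₀ (θ₀ + δ')
      ⊆ {θ : ℝ | θ ∈ Ico 0 (2 * π) ∧ (r * Real.cos θ, r * Real.sin θ) ∈ K} := by
    intro θ hθ
    have hθ1 : θ₀ < θ := hθ.1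
    have hθ2 : θ < θ₀ + δ' := hθ.2
    have hmem1 : θ ∈ Ico 0 (2 * π) :=
      ⟨le_trans hθ₀mem.1 hθ1.le, by
        have : δ' ≤ 2 * π - θ₀ := min_le_right _ _
        linarith⟩
    have hθball : θ ∈ Metric.ball θ₀ δ := by
      rw [Metric.mem_ball, Real.dist_eq, abs_of_pos (by linarith)]
      have : δ' ≤ δ := min_le_left _ _
      linarith
    have hθW := hball hθball
    simp only [mem_setOf_eq] at hθW
    refine ⟨hmem1, hsub ?_⟩
    simp only [mem_setOf_eq]
    nlinarith
  have hvol1 : (0 : ℝ≥0∞) < volume {θ : ℝ | θ ∈ Ico 0 (2 * π)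
      ∧ (r * Real.cos θ, r * Real.sin θ) ∈ K} := by
    calc (0 : ℝ≥0∞) < volume (Ioo θ₀ (θ₀ + δ')) := by
          rw [Real.volume_Ioo]
          simp only [ENNReal.ofReal_pos]
          linarith
      _ ≤ _ := measure_mono hsubA
  have hvol2 : volume {θ : ℝ | θ ∈ Ico 0 (2 * π)
      ∧ (r * Real.cos θ, r * Real.sin θ) ∈ K} ≠ ⊤ := by
    refine ne_of_lt (lt_of_le_of_lt (measure_mono (fun θ hθ => hθ.1)) ?_)
    rw [Real.volume_Ico]
    exact ENNReal.ofReal_lt_top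
  have := ENNReal.toReal_pos hvol1.ne' hvol2
  exact div_pos this (by positivity)

lemma exists_halfplane {U K : Set (ℝ × ℝ)} (hUopen : IsOpen U) (hUconv : Convex ℝ U)
    (hUsymm : ∀ x ∈ U, -x ∈ U) (hK : K = Uᶜ) (hKne : K.Nonempty)
    {r : ℝ} (hr : sInf ((fun p : ℝ × ℝ => Real.sqrt (p.1 ^ 2 + p.2 ^ 2)) '' K) < r) :
    ∃ a b s : ℝ, a ^ 2 + b ^ 2 = 1 ∧ 0 < s ∧ s < r ∧
      {p : ℝ × ℝ | s ≤ a * p.1 + b * p.2} ⊆ K := by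
  have hr0 : 0 < r := lt_of_le_of_lt
    (Real.sInf_nonneg (fun x hx => by
      obtain ⟨p, _, rfl⟩ := hx
      exact Real.sqrt_nonneg _)) hr
  rcases eq_empty_or_nonempty U with hU | hUne
  · refine ⟨1, 0, r / 2, by norm_num, by linarith, by linarith, fun p _ => ?_⟩
    rw [hK, hU, compl_empty]
    exact mem_univ p
  · obtain ⟨w, hwmem, hwlt⟩ := exists_lt_of_csInf_lt (hKne.image _) hr
    obtain ⟨y, hyK, rfl⟩ := hwmem
    obtain ⟨u, hu⟩ := hUne
    have h0U : (0 : ℝ × ℝ) ∈ U := by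
      have := hUconv hu (hUsymm u hu) (by norm_num : (0:ℝ) ≤ 1/2)
        (by norm_num : (0:ℝ) ≤ 1/2) (by norm_num)
      simpa using this
    have hyU : y ∉ U := by
      rw [hK] at hyK
      exact hyK
    obtain ⟨f, hf⟩ := geometric_hahn_banach_open_point hUconv hUopen hyU
    set a0 := f (1, 0) with ha0
    set b0 := f (0, 1) with hb0
    have hfp : ∀ p : ℝ × ℝ, f p = a0 * p.1 + b0 * p.2 := by
      intro p
      have hps : p = p.1 • ((1:ℝ), (0:ℝ)) + p.2 • ((0:ℝ), (1:ℝ)) := by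
        simp [Prod.ext_iff]
      calc f p = f (p.1 • ((1:ℝ), (0:ℝ)) + p.2 • ((0:ℝ), (1:ℝ))) := by rw [← hps]
        _ = a0 * p.1 + b0 * p.2 := by
            rw [map_add, f.map_smul, f.map_smul]
            simp only [smul_eq_mul, ← ha0, ← hb0]
            ring
    have ht : 0 < f y := by
      have h0 := hf 0 h0U
      simpa using h0
    have hpos : 0 < a0 ^ 2 + b0 ^ 2 := by
      rcases (sq_nonneg a0).lt_or_eq with h | h
      · nlinarith [sq_nonneg b0]
      · rcases (sq_nonneg b0).lt_or_eq with h' | h'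
        · nlinarith [sq_nonneg a0]
        · exfalso
          have ha : a0 = 0 := by nlinarith
          have hb : b0 = 0 := by nlinarith
          have := hfp y
          rw [ha, hb] at this
          simp at this
          linarith [ht, this]
    set ρ := Real.sqrt (a0 ^ 2 + b0 ^ 2) with hρdef
    have hρ : 0 < ρ := Real.sqrt_pos.2 hpos
    have hρ2 : ρ ^ 2 = a0 ^ 2 + b0 ^ 2 := Real.sq_sqrt hpos.le
    refine ⟨a0 / ρ, b0 / ρ, f y / ρ, ?_, div_pos ht hρ, ?_, ?_⟩
    · field_simp
      linarith [hρ2]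
    · have hty : f y = a0 * y.1 + b0 * y.2 := hfp y
      have hCS : (f y) ^ 2 ≤ (a0 ^ 2 + b0 ^ 2) * (y.1 ^ 2 + y.2 ^ 2) := by
        rw [hty]
        nlinarith [sq_nonneg (a0 * y.2 - b0 * y.1)]
      have hsq : (ρ * Real.sqrt (y.1 ^ 2 + y.2 ^ 2)) ^ 2
          = (a0 ^ 2 + b0 ^ 2) * (y.1 ^ 2 + y.2 ^ 2) := by
        rw [mul_pow, hρ2, Real.sq_sqrt (by positivity)]
      have hle : f y ≤ ρ * Real.sqrt (y.1 ^ 2 + y.2 ^ 2) := by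
        nlinarith [mul_nonneg hρ.le (Real.sqrt_nonneg (y.1 ^ 2 + y.2 ^ 2))]
      rw [div_lt_iff₀ hρ]
      calc f y ≤ ρ * Real.sqrt (y.1 ^ 2 + y.2 ^ 2) := hle
        _ < r * ρ := by
            rw [mul_comm]
            exact mul_lt_mul_of_pos_right hwlt hρ
    · intro p hp
      simp only [mem_setOf_eq] at hp
      rw [hK]
      intro hpU
      have hlt := hf p hpU
      rw [hfp p] at hlt
      have e1 : ρ * (f y / ρ) = f y := by field_simp
      have e2 : ρ * (a0 / ρ * p.1 + b0 / ρ * p.2) = a0 * p.1 + b0 * p.2 := by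
        field_simp
      have := mul_le_mul_of_nonneg_left hp hρ.le
      rw [e1, e2] at this
      linarith

end Aux

/-- There is a universal constant `c > 0` such that for every `K ⊆ ℝ²` that is the complement
of an open convex origin-symmetric set, and every `0 < ε < 1/3`,
`c · ε^{1/2} · e^{-(1+ε)Δ_K²/2} ≤ 𝒢(K) ≤ e^{-Δ_K²/2}`, where `Δ_K = inf {r > 0 : μ_K(r) > 0}`. -/
theorem gaussian_measure_complement_convex :
    ∃ c : ℝ, 0 < c ∧
      ∀ K U : Set (ℝ × ℝ), IsOpen U → Convex ℝ U → (∀ x ∈ U, -x ∈ U) → K = Uᶜ →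
        ∀ ε : ℝ, 0 < ε → ε < 1 / 3 →
          c * Real.sqrt ε * expNegDistSq K ((1 + ε) / 2) ≤ (gauss2 K).toReal ∧
            (gauss2 K).toReal ≤ expNegDistSq K (1 / 2) := by
  refine ⟨Real.exp (-2/3) / Real.sqrt (2 * π), by positivity, ?_⟩
  intro K U hUopen hUconv hUsymm hK ε hε hε3
  haveI : IsProbabilityMeasure gauss2 := by unfold gauss2; infer_instance
  set C := Real.exp (-2/3) / Real.sqrt (2 * π) with hC
  have hCpos : 0 < C := by positivity
  rcases Set.eq_empty_or_nonempty K with hKe | hKne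
  · have h1 : essDistSet K = ∅ := by
      ext r
      simp [essDistSet, circFrac, hKe]
    rw [expNegDistSq, expNegDistSq, h1, Set.image_empty, Real.sSup_empty, hKe]
    simp
  · set Δ := sInf ((fun p : ℝ × ℝ => Real.sqrt (p.1 ^ 2 + p.2 ^ 2)) '' K) with hΔdef
    have hbdd : BddBelow ((fun p : ℝ × ℝ => Real.sqrt (p.1 ^ 2 + p.2 ^ 2)) '' K) :=
      ⟨0, fun z hz => by obtain ⟨p, _, rfl⟩ := hz; exact Real.sqrt_nonneg _⟩
    have hΔ0 : 0 ≤ Δ := Real.sInf_nonneg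
      (fun x hx => by obtain ⟨p, _, rfl⟩ := hx; exact Real.sqrt_nonneg _)
    have hmemK : ∀ p ∈ K, Δ ≤ Real.sqrt (p.1 ^ 2 + p.2 ^ 2) :=
      fun p hp => csInf_le hbdd ⟨p, hp, rfl⟩
    have hlow : ∀ r ∈ essDistSet K, Δ ≤ r := by
      rintro r ⟨hr, hcf⟩
      by_contra hlt
      push_neg at hlt
      have hempty : {θ : ℝ | θ ∈ Set.Ico 0 (2 * π)
          ∧ (r * Real.cos θ, r * Real.sin θ) ∈ K} = ∅ := by
        ext θ
        simp only [Set.mem_setOf_eq, Set.mem_empty_iff_false, iff_false, not_and]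
        intro _ hmem
        have h := hmemK _ hmem
        have hs : Real.sqrt ((r * Real.cos θ) ^ 2 + (r * Real.sin θ) ^ 2) = r := by
          rw [show (r * Real.cos θ) ^ 2 + (r * Real.sin θ) ^ 2 = r ^ 2 by
            nlinarith [Real.sin_sq_add_cos_sq θ], Real.sqrt_sq hr.le]
        rw [hs] at h
        linarith
      rw [circFrac, hempty] at hcf
      simp at hcf
    have hhigh : ∀ r, Δ < r → r ∈ essDistSet K := by
      intro r hrΔ
      have hr0 : 0 < r := lt_of_le_of_lt hΔ0 hrΔ
      obtain ⟨a, b, s, hab, hs0, hsr, hsub⟩ :=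
        exists_halfplane hUopen hUconv hUsymm hK hKne hrΔ
      exact ⟨hr0, circFrac_pos hab hsr hsub hr0⟩
    constructor
    · rw [expNegDistSq, sSup_image_exp hΔ0 (by linarith) hlow hhigh]
      have hstep : ∀ r, Δ < r →
          C * Real.sqrt ε * Real.exp (-((1 + ε) / 2 * r ^ 2)) ≤ (gauss2 K).toReal := by
        intro r hrΔ
        obtain ⟨a, b, s, hab, hs0, hsr, hsub⟩ :=
          exists_halfplane hUopen hUconv hUsymm hK hKne hrΔ
        have h1 := tail_lb hs0 hε hε3
        rw [← gauss2_halfplane hab, ← hC] at h1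
        have h2 : (gauss2 {p : ℝ × ℝ | s ≤ a * p.1 + b * p.2}).toReal ≤ (gauss2 K).toReal :=
          ENNReal.toReal_mono (measure_ne_top _ _) (measure_mono hsub)
        have h3 : Real.exp (-((1 + ε) / 2 * r ^ 2)) ≤ Real.exp (-((1 + ε) / 2 * s ^ 2)) := by
          apply Real.exp_le_exp.2
          have hss : s ^ 2 ≤ r ^ 2 := pow_le_pow_left₀ hs0.le hsr.le 2
          nlinarith
        calc C * Real.sqrt ε * Real.exp (-((1 + ε) / 2 * r ^ 2))
            ≤ C * Real.sqrt ε * Real.exp (-((1 + ε) / 2 * s ^ 2)) :=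
              mul_le_mul_of_nonneg_left h3 (by positivity)
          _ ≤ _ := le_trans h1 h2
      have h0 : Filter.Tendsto (fun n : ℕ => Δ + 1 / ((n : ℝ) + 1)) Filter.atTop (nhds Δ) := by
        have := tendsto_one_div_add_atTop_nhds_zero_nat (𝕜 := ℝ)
        simpa using (tendsto_const_nhds (x := Δ) (f := Filter.atTop)).add this
      have hcont : Continuous fun x : ℝ =>
          C * Real.sqrt ε * Real.exp (-((1 + ε) / 2 * x ^ 2)) := by continuity
      refine le_of_tendsto ((hcont.tendsto Δ).comp h0) (Filter.Eventually.of_forall fun n => ?_)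
      exact hstep _ (lt_add_of_pos_right Δ (by positivity))
    · rw [expNegDistSq, sSup_image_exp hΔ0 one_half_pos hlow hhigh]
      have hsub : K ⊆ {q : ℝ × ℝ | Δ ^ 2 ≤ q.1 ^ 2 + q.2 ^ 2} := by
        intro p hp
        have h := hmemK p hp
        have h2 : Δ ^ 2 ≤ Real.sqrt (p.1 ^ 2 + p.2 ^ 2) ^ 2 := pow_le_pow_left₀ hΔ0 h 2
        rwa [Real.sq_sqrt (by positivity)] at h2
      have hmono : (gauss2 K).toReal
          ≤ (gauss2 {q : ℝ × ℝ | Δ ^ 2 ≤ q.1 ^ 2 + q.2 ^ 2}).toReal :=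
        ENNReal.toReal_mono (measure_ne_top _ _) (measure_mono hsub)
      rw [gauss2_compl_ball hΔ0] at hmono
      rw [show (-(1 / 2 * Δ ^ 2) : ℝ) = -Δ ^ 2 / 2 by ring]
      exact hmono
end
end

section
/- Let 0 < τ < 2, α = 1 − τ²/2, β = √(τ² − τ⁴/4). For u, v ∈ ℝ with u ≥ 0 and αu + βv ≥ 0, define σ(u,v) = Pr_{X₂,Y₂ ~ N(0,1), independent}[ |X₂| ≤ u and |αX₂ + βY₂| ≤ αu + βv ] and Δ(u,v) = min{u, αu + βv}. There is a universal constant c > 0 such that for every such u, v and every 0 < ε < 1/3: 1 − e^{−Δ(u,v)²/2} ≤ σ(u,v) ≤ 1 − c · ε^{1/2} · e^{−(1+ε)·Δ(u,v)²/2}. -/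
open MeasureTheory ProbabilityTheory Real
open scoped ENNReal

noncomputable section

/-- `σ(u,v) = Pr_{X₂,Y₂}[ |X₂| ≤ u ∧ |αX₂ + βY₂| ≤ αu + βv ]`. -/
def sigmaProb (α β u v : ℝ) : ℝ :=
  (gauss2 {z : ℝ × ℝ | |z.1| ≤ u ∧ |α * z.1 + β * z.2| ≤ α * u + β * v}).toReal

instance : IsProbabilityMeasure gauss2 := by
  unfold gauss2; infer_instance

/-- real density of gauss2 -/
def g2d (p : ℝ × ℝ) : ℝ := (2 * π)⁻¹ * Real.exp (-(p.1 ^ 2 + p.2 ^ 2) / 2)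

lemma g2d_nonneg (p : ℝ × ℝ) : 0 ≤ g2d p := by
  unfold g2d; positivity

lemma gaussianPDFReal_prod (x y : ℝ) :
    gaussianPDFReal 0 1 x * gaussianPDFReal 0 1 y = g2d (x, y) := by
  unfold gaussianPDFReal g2d
  have h2π : (0:ℝ) ≤ 2 * π := by positivity
  have hs : Real.sqrt (2 * π * 1) * Real.sqrt (2 * π * 1) = 2 * π := by
    rw [mul_one]; exact Real.mul_self_sqrt h2π
  have hspos : 0 < Real.sqrt (2 * π * 1) := by
    apply Real.sqrt_pos.2; positivity
  push_cast
  rw [mul_mul_mul_comm, ← Real.exp_add, ← mul_inv, hs]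
  norm_num
  ring_nf

lemma measurable_g2d : Measurable g2d := by
  unfold g2d
  fun_prop

lemma gauss2_eq_withDensity_s5 :
    gauss2 = (volume : Measure (ℝ × ℝ)).withDensity (fun p => ENNReal.ofReal (g2d p)) := by
  unfold gauss2
  refine Measure.prod_eq fun s t hs ht => ?_
  rw [withDensity_apply _ (hs.prod ht), Measure.volume_eq_prod, ← Measure.prod_restrict]
  have : ∀ p : ℝ × ℝ, ENNReal.ofReal (g2d p)
      = gaussianPDF 0 1 p.1 * gaussianPDF 0 1 p.2 := by
    intro p
    rw [← gaussianPDFReal_prod p.1 p.2]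
    unfold gaussianPDF
    rw [ENNReal.ofReal_mul (gaussianPDFReal_nonneg 0 1 p.1)]
  simp_rw [this]
  rw [lintegral_prod_mul (measurable_gaussianPDF 0 1).aemeasurable
    (measurable_gaussianPDF 0 1).aemeasurable]
  rw [gaussianReal_of_var_ne_zero _ one_ne_zero, withDensity_apply _ hs, withDensity_apply _ ht]

lemma map_withDensity_equiv {α : Type*} [MeasurableSpace α] (e : α ≃ᵐ α) (μ : Measure α)
    (f : α → ℝ≥0∞) (hf : Measurable f) :
    (μ.withDensity (fun x => f (e x))).map e = (μ.map e).withDensity f := by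
  ext s hs
  rw [Measure.map_apply e.measurable hs, withDensity_apply _ (e.measurable hs),
    withDensity_apply _ hs, setLIntegral_map hs hf e.measurable]

section Rot
variable (a b : ℝ)

/-- rotation-like linear map -/
def rotL (a b : ℝ) : (ℝ × ℝ) →ₗ[ℝ] (ℝ × ℝ) :=
  Matrix.toLin (Module.Basis.finTwoProd ℝ) (Module.Basis.finTwoProd ℝ) !![a, b; -b, a]

lemma rotL_apply (p : ℝ × ℝ) : rotL a b p = (a * p.1 + b * p.2, -b * p.1 + a * p.2) := by
  unfold rotL
  rw [show p = (p.1, p.2) from rfl, Matrix.toLin_finTwoProd_apply]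

lemma rotL_det : LinearMap.det (rotL a b) = a ^ 2 + b ^ 2 := by
  unfold rotL
  rw [LinearMap.det_toLin, Matrix.det_fin_two_of]
  ring

lemma map_rotL_volume (h : a ^ 2 + b ^ 2 = 1) :
    Measure.map (rotL a b) (volume : Measure (ℝ × ℝ)) = volume := by
  rw [Measure.map_linearMap_addHaar_eq_smul_addHaar _ (by rw [rotL_det, h]; norm_num),
    rotL_det, h]
  norm_num

lemma rotL_inv (h : a ^ 2 + b ^ 2 = 1) (p : ℝ × ℝ) :
    rotL a (-b) (rotL a b p) = p ∧ rotL a b (rotL a (-b) p) = p := by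
  obtain ⟨p1, p2⟩ := p
  simp only [rotL_apply, Prod.mk.injEq]
  refine ⟨⟨?_, ?_⟩, ?_, ?_⟩
  · linear_combination p1 * h
  · linear_combination p2 * h
  · linear_combination p1 * h
  · linear_combination p2 * h

/-- rotation as a measurable equivalence -/
def rotE (a b : ℝ) (h : a ^ 2 + b ^ 2 = 1) : (ℝ × ℝ) ≃ᵐ (ℝ × ℝ) where
  toFun := rotL a b
  invFun := rotL a (-b)
  left_inv := fun p => (rotL_inv a b h p).1
  right_inv := fun p => (rotL_inv a b h p).2
  measurable_toFun := (rotL a b).continuous_of_finiteDimensional.measurable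
  measurable_invFun := (rotL a (-b)).continuous_of_finiteDimensional.measurable

lemma map_rotL_gauss2 (h : a ^ 2 + b ^ 2 = 1) :
    Measure.map (rotL a b) gauss2 = gauss2 := by
  have hg2d : ∀ p : ℝ × ℝ, g2d (rotL a b p) = g2d p := by
    intro p
    rw [rotL_apply]
    unfold g2d
    have : (a * p.1 + b * p.2) ^ 2 + (-b * p.1 + a * p.2) ^ 2 = p.1 ^ 2 + p.2 ^ 2 := by
      nlinarith [h]
    rw [this]
  have hco : ⇑(rotE a b h) = ⇑(rotL a b) := rfl
  rw [gauss2_eq_withDensity_s5, ← hco]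
  have : (fun p : ℝ × ℝ => ENNReal.ofReal (g2d p))
      = fun p => ENNReal.ofReal (g2d (rotE a b h p)) := by
    funext p
    rw [hco]
    simp only [hg2d]
  conv_lhs => rw [this]
  have key := map_withDensity_equiv (rotE a b h) volume
    (fun p => ENNReal.ofReal (g2d p)) measurable_g2d.ennreal_ofReal
  rw [key, hco, map_rotL_volume a b h]

lemma map_proj_gauss2 (h : a ^ 2 + b ^ 2 = 1) :
    Measure.map (fun p : ℝ × ℝ => a * p.1 + b * p.2) gauss2 = gaussianReal 0 1 := by
  have hmeas : Measurable (rotL a b) := (rotL a b).continuous_of_finiteDimensional.measurable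
  have : (fun p : ℝ × ℝ => a * p.1 + b * p.2) = Prod.fst ∘ (rotL a b) := by
    funext p
    simp [rotL_apply]
  rw [this, ← Measure.map_map measurable_fst hmeas, map_rotL_gauss2 a b h]
  unfold gauss2
  simp

end Rot

/-! ### Tail lower bounds -/

lemma pdf_eval (x : ℝ) : gaussianPDFReal 0 1 x = (Real.sqrt (2 * π))⁻¹ * Real.exp (-x ^ 2 / 2) := by
  unfold gaussianPDFReal
  norm_num

lemma tail_lb_s5 (t s : ℝ) (ht : 0 ≤ t) (hs : 0 ≤ s) :
    ENNReal.ofReal (s * gaussianPDFReal 0 1 (t + s)) ≤ gaussianReal 0 1 (Set.Ioi t) := by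
  have h1 : gaussianReal 0 1 (Set.Ioc t (t + s)) ≤ gaussianReal 0 1 (Set.Ioi t) :=
    measure_mono Set.Ioc_subset_Ioi_self
  refine le_trans ?_ h1
  rw [gaussianReal_apply _ one_ne_zero]
  have h2 : ∀ x ∈ Set.Ioc t (t + s),
      ENNReal.ofReal (gaussianPDFReal 0 1 (t + s)) ≤ gaussianPDF 0 1 x := by
    intro x hx
    unfold gaussianPDF
    apply ENNReal.ofReal_le_ofReal
    rw [pdf_eval, pdf_eval]
    have hx2 : x ^ 2 ≤ (t + s) ^ 2 := by nlinarith [hx.1, hx.2]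
    have : Real.exp (-(t + s) ^ 2 / 2) ≤ Real.exp (-x ^ 2 / 2) := by
      apply Real.exp_le_exp.2; linarith
    have hpos : (0:ℝ) ≤ (Real.sqrt (2 * π))⁻¹ := by positivity
    exact mul_le_mul_of_nonneg_left this hpos
  calc ENNReal.ofReal (s * gaussianPDFReal 0 1 (t + s))
      = ENNReal.ofReal (gaussianPDFReal 0 1 (t + s)) * volume (Set.Ioc t (t + s)) := by
        rw [Real.volume_Ioc, show t + s - t = s by ring,
          ← ENNReal.ofReal_mul (gaussianPDFReal_nonneg 0 1 (t + s)), mul_comm]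
    _ = ∫⁻ _ in Set.Ioc t (t + s), ENNReal.ofReal (gaussianPDFReal 0 1 (t + s)) := by
        rw [setLIntegral_const]
    _ ≤ ∫⁻ x in Set.Ioc t (t + s), gaussianPDF 0 1 x :=
        setLIntegral_mono (measurable_gaussianPDF 0 1) h2

lemma tail_lb_real (t s : ℝ) (ht : 0 ≤ t) (hs : 0 ≤ s) :
    s * gaussianPDFReal 0 1 (t + s) ≤ (gaussianReal 0 1 (Set.Ioi t)).toReal := by
  have := ENNReal.toReal_mono (measure_ne_top _ _) (tail_lb_s5 t s ht hs)
  rwa [ENNReal.toReal_ofReal (mul_nonneg hs (gaussianPDFReal_nonneg 0 1 (t+s)))] at this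

lemma sqrt_two_pi_le : Real.sqrt (2 * π) ≤ 2.51 := by
  rw [show √(2*π) ≤ 2.51 ↔ 0 ≤ (2.51:ℝ) ∧ 2*π ≤ 2.51^2 from Real.sqrt_le_iff]
  constructor
  · norm_num
  · nlinarith [Real.pi_lt_d2]

lemma exp_two_le : Real.exp 2 ≤ 7.39 := by
  have h := Real.exp_one_lt_d9
  have : Real.exp 2 = Real.exp 1 * Real.exp 1 := by rw [← Real.exp_add]; norm_num
  nlinarith [Real.exp_pos 1]

lemma exp_three_half_le : Real.exp (3/2) ≤ 4.5 := by
  have h := Real.exp_one_lt_d9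
  have h3 : Real.exp 3 = Real.exp 1 * Real.exp 1 * Real.exp 1 := by
    rw [← Real.exp_add, ← Real.exp_add]; norm_num
  have hsq : Real.exp (3/2) * Real.exp (3/2) = Real.exp 3 := by
    rw [← Real.exp_add]; norm_num
  nlinarith [Real.exp_pos 1, Real.exp_pos (3/2)]

lemma tail_key (Δ ε : ℝ) (hΔ : 0 ≤ Δ) (hε : 0 < ε) (hε3 : ε < 1/3) :
    1/20 * Real.sqrt ε * Real.exp (-((1 + ε) * Δ ^ 2) / 2)
      ≤ (gaussianReal 0 1 (Set.Ioi Δ)).toReal := by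
  have hsq2π : Real.sqrt (2 * π) ≤ 2.51 := sqrt_two_pi_le
  have hsqpos : (0:ℝ) < Real.sqrt (2 * π) := by
    apply Real.sqrt_pos.2; positivity
  rcases le_or_gt Δ 1 with hle | hgt
  · -- small Δ : use Q(Δ) ≥ Q(1) ≥ 1 * pdf(2)
    have h1 : (gaussianReal 0 1 (Set.Ioi 1)).toReal ≤ (gaussianReal 0 1 (Set.Ioi Δ)).toReal :=
      ENNReal.toReal_mono (measure_ne_top _ _) (measure_mono (Set.Ioi_subset_Ioi hle))
    have h2 : (1:ℝ) * gaussianPDFReal 0 1 (1 + 1) ≤ (gaussianReal 0 1 (Set.Ioi 1)).toReal :=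
      tail_lb_real 1 1 zero_le_one zero_le_one
    refine le_trans ?_ (le_trans h2 h1)
    rw [one_mul, show (1:ℝ) + 1 = 2 by norm_num, pdf_eval]
    have hε1 : Real.sqrt ε ≤ 1 := by
      rw [show √ε ≤ 1 ↔ 0 ≤ (1:ℝ) ∧ ε ≤ 1^2 from Real.sqrt_le_iff]
      constructor <;> nlinarith
    have hexp1 : Real.exp (-((1 + ε) * Δ ^ 2) / 2) ≤ 1 := by
      apply Real.exp_le_one_iff.2; nlinarith
    have hsqε : 0 ≤ Real.sqrt ε := Real.sqrt_nonneg ε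
    have key : (1:ℝ)/20 ≤ (Real.sqrt (2*π))⁻¹ * Real.exp (-2^2/2) := by
      have : Real.exp (-2^2/2) = (Real.exp 2)⁻¹ := by
        rw [← Real.exp_neg]; norm_num
      rw [this]
      have h1 : (2.51:ℝ)⁻¹ ≤ (Real.sqrt (2*π))⁻¹ := by
        apply inv_anti₀ hsqpos hsq2π
      have h2 : (7.39:ℝ)⁻¹ ≤ (Real.exp 2)⁻¹ := by
        apply inv_anti₀ (Real.exp_pos 2) exp_two_le
      calc (1:ℝ)/20 ≤ 2.51⁻¹ * 7.39⁻¹ := by norm_num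
        _ ≤ (Real.sqrt (2*π))⁻¹ * (Real.exp 2)⁻¹ := by
            apply mul_le_mul h1 h2 (by positivity) (by positivity)
    calc 1/20 * Real.sqrt ε * Real.exp (-((1 + ε) * Δ ^ 2) / 2)
        ≤ 1/20 * 1 * 1 := by
          apply mul_le_mul (mul_le_mul le_rfl hε1 hsqε (by norm_num)) hexp1
            (Real.exp_nonneg _) (by norm_num)
      _ ≤ (Real.sqrt (2*π))⁻¹ * Real.exp (-2^2/2) := by rw [mul_one, mul_one]; exact key
  · -- large Δ : use s = 1/Δ
    have hΔpos : (0:ℝ) < Δ := lt_of_lt_of_le one_pos hgt.le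
    have h2 : (1/Δ) * gaussianPDFReal 0 1 (Δ + 1/Δ) ≤ (gaussianReal 0 1 (Set.Ioi Δ)).toReal :=
      tail_lb_real Δ (1/Δ) hΔ (by positivity)
    refine le_trans ?_ h2
    rw [pdf_eval]
    -- pdf(Δ + 1/Δ) ≥ (√(2π))⁻¹ exp(-Δ²/2) exp(-3/2)
    have hexp_ge : Real.exp (-3/2) * Real.exp (-Δ^2/2) ≤ Real.exp (-(Δ + 1/Δ)^2/2) := by
      rw [← Real.exp_add]
      apply Real.exp_le_exp.2
      have hid : (Δ + 1/Δ)^2 = Δ^2 + 2 + (1/Δ)^2 := by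
        field_simp; ring
      have : (1/Δ)^2 ≤ 1 := by
        rw [div_pow, one_pow]
        apply div_le_one_of_le₀ (by nlinarith) (by positivity)
      nlinarith
    -- √ε * Δ * exp(-εΔ²/2) ≤ 1
    have hsε : 0 ≤ Real.sqrt ε := Real.sqrt_nonneg ε
    have hsq : Real.sqrt ε ^ 2 = ε := Real.sq_sqrt hε.le
    have key1 : Real.sqrt ε * Δ * Real.exp (-(ε * Δ^2)/2) ≤ 1 := by
      set s := Real.sqrt ε * Δ with hs
      have hs0 : 0 ≤ s := mul_nonneg hsε hΔ
      have hs2 : s^2 = ε * Δ^2 := by rw [hs, mul_pow, hsq]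
      rw [← hs2]
      have h1 : s ≤ Real.exp (s^2/2) := by
        have := Real.add_one_le_exp (s^2/2)
        nlinarith
      rw [show -(s^2)/2 = -(s^2/2) by ring, Real.exp_neg, ← div_eq_mul_inv]
      exact (div_le_one (Real.exp_pos _)).mpr h1
    have key2 : (1:ℝ)/20 ≤ (Real.sqrt (2*π))⁻¹ * Real.exp (-3/2) := by
      have : Real.exp (-3/2) = (Real.exp (3/2))⁻¹ := by
        rw [← Real.exp_neg]; norm_num
      rw [this]
      have h1 : (2.51:ℝ)⁻¹ ≤ (Real.sqrt (2*π))⁻¹ := inv_anti₀ hsqpos hsq2π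
      have h2 : (4.5:ℝ)⁻¹ ≤ (Real.exp (3/2))⁻¹ :=
        inv_anti₀ (Real.exp_pos _) exp_three_half_le
      calc (1:ℝ)/20 ≤ 2.51⁻¹ * 4.5⁻¹ := by norm_num
        _ ≤ _ := mul_le_mul h1 h2 (by positivity) (by positivity)
    have hsplit : Real.exp (-((1 + ε) * Δ ^ 2) / 2)
        = Real.exp (-(Δ^2)/2) * Real.exp (-(ε * Δ^2)/2) := by
      rw [← Real.exp_add]; ring_nf
    rw [hsplit]
    have expand : 1/Δ * ((Real.sqrt (2*π))⁻¹ * Real.exp (-(Δ + 1/Δ)^2/2))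
        ≥ (1/Δ) * ((Real.sqrt (2*π))⁻¹ * (Real.exp (-3/2) * Real.exp (-Δ^2/2))) := by
      apply mul_le_mul_of_nonneg_left _ (by positivity)
      exact mul_le_mul_of_nonneg_left hexp_ge (by positivity)
    refine le_trans ?_ expand
    -- goal: 1/20 * √ε * (exp(-Δ²/2) * exp(-εΔ²/2)) ≤ (1/Δ) * ((√2π)⁻¹ * (exp(-3/2) * exp(-Δ²/2)))
    rw [show (1:ℝ)/Δ * ((Real.sqrt (2*π))⁻¹ * (Real.exp (-3/2) * Real.exp (-Δ^2/2)))
        = (((Real.sqrt (2*π))⁻¹ * Real.exp (-3/2)) * Real.exp (-Δ^2/2)) / Δ from by ring,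
      le_div_iff₀ hΔpos]
    calc 1/20 * Real.sqrt ε * (Real.exp (-Δ^2/2) * Real.exp (-(ε * Δ^2)/2)) * Δ
        = 1/20 * (Real.sqrt ε * Δ * Real.exp (-(ε * Δ^2)/2)) * Real.exp (-Δ^2/2) := by ring
      _ ≤ 1/20 * 1 * Real.exp (-Δ^2/2) := by
          apply mul_le_mul_of_nonneg_right _ (Real.exp_nonneg _)
          exact mul_le_mul_of_nonneg_left key1 (by norm_num)
      _ ≤ ((Real.sqrt (2*π))⁻¹ * Real.exp (-3/2)) * Real.exp (-Δ^2/2) := by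
          apply mul_le_mul_of_nonneg_right _ (Real.exp_nonneg _)
          rw [mul_one]
          exact key2

/-! ### Disk lower bound -/

lemma continuous_g2d : Continuous g2d := by
  unfold g2d
  fun_prop

lemma radial_integral (Δ : ℝ) (hΔ : 0 ≤ Δ) :
    ∫ r in Set.Ioc 0 Δ, r * ((2*π)⁻¹ * Real.exp (-r^2/2))
      = (2*π)⁻¹ * (1 - Real.exp (-Δ^2/2)) := by
  rw [← intervalIntegral.integral_of_le hΔ]
  have hderiv : ∀ x ∈ Set.uIcc (0:ℝ) Δ,
      HasDerivAt (fun r => -(2*π)⁻¹ * Real.exp (-r^2/2))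
        (x * ((2*π)⁻¹ * Real.exp (-x^2/2))) x := by
    intro x _
    have h1 : HasDerivAt (fun r : ℝ => -r^2/2) (-x) x := by
      have := ((hasDerivAt_pow 2 x).div_const 2).neg
      simp only [Nat.cast_ofNat, pow_one] at this
      refine (this.congr_deriv (by norm_num)).congr_of_eventuallyEq (Filter.Eventually.of_forall fun r => ?_)
      simp only [Pi.neg_apply]; ring
    have h2 := (h1.exp).const_mul (-(2*π)⁻¹)
    refine h2.congr_deriv ?_
    ring
  rw [intervalIntegral.integral_eq_sub_of_hasDerivAt hderiv
    ((Continuous.intervalIntegrable (by fun_prop) 0 Δ))]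
  simp
  ring

lemma disk_lb (Δ : ℝ) (hΔ : 0 ≤ Δ) :
    ENNReal.ofReal (1 - Real.exp (-Δ^2/2)) ≤ gauss2 {p : ℝ × ℝ | p.1^2 + p.2^2 ≤ Δ^2} := by
  set D := {p : ℝ × ℝ | p.1^2 + p.2^2 ≤ Δ^2} with hD
  have hDclosed : IsClosed D := isClosed_le (by fun_prop) continuous_const
  have hDmeas : MeasurableSet D := hDclosed.measurableSet
  have hDcompact : IsCompact D := by
    apply Metric.isCompact_of_isClosed_isBounded hDclosed
    apply Bornology.IsBounded.subset (Metric.isBounded_closedBall (x := (0:ℝ×ℝ)) (r := Δ))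
    intro p hp
    simp only [Metric.mem_closedBall, dist_zero_right]
    have h1 : p.1^2 ≤ Δ^2 := by have := hp; simp only [hD, Set.mem_setOf_eq] at this; nlinarith
    have h2 : p.2^2 ≤ Δ^2 := by have := hp; simp only [hD, Set.mem_setOf_eq] at this; nlinarith
    have ha1 : |p.1| ≤ Δ := by nlinarith [abs_nonneg p.1, sq_abs p.1]
    have ha2 : |p.2| ≤ Δ := by nlinarith [abs_nonneg p.2, sq_abs p.2]
    calc ‖p‖ = max ‖p.1‖ ‖p.2‖ := rfl
      _ ≤ Δ := max_le ha1 ha2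
  have hint : IntegrableOn g2d D volume :=
    continuous_g2d.continuousOn.integrableOn_compact hDcompact
  rw [gauss2_eq_withDensity_s5, withDensity_apply _ hDmeas,
    ← ofReal_integral_eq_lintegral_ofReal hint (Filter.Eventually.of_forall fun p => g2d_nonneg p)]
  apply ENNReal.ofReal_le_ofReal
  -- now compute the real integral exactly
  rw [← integral_indicator hDmeas, ← integral_comp_polarCoord_symm (D.indicator g2d)]
  set k : ℝ → ℝ := Set.indicator (Set.Ioc 0 Δ) (fun r => r * ((2*π)⁻¹ * Real.exp (-r^2/2)))
    with hk
  have hcongr : ∀ p ∈ polarCoord.target, p.1 • (D.indicator g2d) (polarCoord.symm p) = k p.1 := by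
    intro p hp
    have hp1 : 0 < p.1 := hp.1
    have hsymm : polarCoord.symm p = (p.1 * Real.cos p.2, p.1 * Real.sin p.2) :=
      polarCoord_symm_apply p
    have hnorm : (p.1 * Real.cos p.2)^2 + (p.1 * Real.sin p.2)^2 = p.1^2 := by
      nlinarith [Real.sin_sq_add_cos_sq p.2]
    by_cases hmem : p.1 ≤ Δ
    · have hmemD : polarCoord.symm p ∈ D := by
        rw [hsymm]
        simp only [hD, Set.mem_setOf_eq]
        rw [hnorm]
        nlinarith
      rw [Set.indicator_of_mem hmemD, hk, Set.indicator_of_mem (Set.mem_Ioc.2 ⟨hp1, hmem⟩)]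
      rw [hsymm]
      unfold g2d
      simp only
      rw [hnorm, smul_eq_mul]
    · have hmemD : polarCoord.symm p ∉ D := by
        rw [hsymm]
        simp only [hD, Set.mem_setOf_eq]
        rw [hnorm]
        push_neg at hmem ⊢
        nlinarith
      rw [Set.indicator_of_notMem hmemD, hk,
        Set.indicator_of_notMem (by simp [Set.mem_Ioc]; intro h; linarith), smul_zero]
  rw [setIntegral_congr_fun polarCoord.open_target.measurableSet hcongr]
  -- split the product integral
  have htarget : polarCoord.target = Set.Ioi (0:ℝ) ×ˢ Set.Ioo (-π) π := rfl
  rw [htarget, Measure.volume_eq_prod, ← Measure.prod_restrict]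
  have : ∀ p : ℝ × ℝ, k p.1 = k p.1 * (fun _ : ℝ => (1:ℝ)) p.2 := by intro p; simp
  rw [show (fun p : ℝ × ℝ => k p.1) = fun p : ℝ × ℝ => k p.1 * (fun _ : ℝ => (1:ℝ)) p.2 from
    funext this]
  rw [integral_prod_mul (μ := volume.restrict (Set.Ioi 0))
    (ν := volume.restrict (Set.Ioo (-π) π)) k (fun _ => (1:ℝ))]
  simp only [integral_const, measure_univ, smul_eq_mul, mul_one]
  rw [Measure.real, Measure.restrict_apply MeasurableSet.univ, Set.univ_inter, Real.volume_Ioo]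
  rw [hk, integral_indicator measurableSet_Ioc, Measure.restrict_restrict measurableSet_Ioc,
    Set.inter_eq_left.2 (fun x hx => hx.1), radial_integral Δ hΔ]
  rw [show π - -π = 2*π by ring, ENNReal.toReal_ofReal (by positivity)]
  have hπ : (2:ℝ)*π ≠ 0 := by positivity
  field_simp
  exact le_rfl

/-! ### Upper bounds via marginals -/

lemma gauss2_add_tail_fst (a b u w : ℝ) :
    (gauss2 {z : ℝ × ℝ | |z.1| ≤ u ∧ |a * z.1 + b * z.2| ≤ w}).toReal
      + (gaussianReal 0 1 (Set.Ioi u)).toReal ≤ 1 := by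
  set S := {z : ℝ × ℝ | |z.1| ≤ u ∧ |a * z.1 + b * z.2| ≤ w} with hS
  set T := Set.Ioi u ×ˢ (Set.univ : Set ℝ) with hT
  have hdis : Disjoint S T := by
    rw [Set.disjoint_left]
    intro z hz hzT
    have h1 : z.1 ≤ u := (abs_le.1 hz.1).2
    have h2 : u < z.1 := hzT.1
    linarith
  have hTmeas : MeasurableSet T := measurableSet_Ioi.prod MeasurableSet.univ
  have hunion := measure_union hdis hTmeas (μ := gauss2)
  have hTval : gauss2 T = gaussianReal 0 1 (Set.Ioi u) := by
    rw [hT]; unfold gauss2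
    rw [Measure.prod_prod, measure_univ, mul_one]
  have hle : gauss2 S + gaussianReal 0 1 (Set.Ioi u) ≤ 1 := by
    rw [← hTval, ← hunion]
    exact prob_le_one
  have h2 := ENNReal.toReal_mono ENNReal.one_ne_top hle
  rwa [ENNReal.toReal_add (measure_ne_top _ _) (measure_ne_top _ _), ENNReal.toReal_one] at h2

lemma gauss2_add_tail_snd (a b u w : ℝ) (h : a ^ 2 + b ^ 2 = 1) :
    (gauss2 {z : ℝ × ℝ | |z.1| ≤ u ∧ |a * z.1 + b * z.2| ≤ w}).toReal
      + (gaussianReal 0 1 (Set.Ioi w)).toReal ≤ 1 := by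
  set S := {z : ℝ × ℝ | |z.1| ≤ u ∧ |a * z.1 + b * z.2| ≤ w} with hS
  have hfmeas : Measurable (fun z : ℝ × ℝ => a * z.1 + b * z.2) := by fun_prop
  set T := (fun z : ℝ × ℝ => a * z.1 + b * z.2) ⁻¹' (Set.Ioi w) with hT
  have hdis : Disjoint S T := by
    rw [Set.disjoint_left]
    intro z hz hzT
    have h1 : a * z.1 + b * z.2 ≤ w := (abs_le.1 hz.2).2
    have h2 : w < a * z.1 + b * z.2 := hzT
    linarith
  have hTmeas : MeasurableSet T := hfmeas measurableSet_Ioi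
  have hunion := measure_union hdis hTmeas (μ := gauss2)
  have hTval : gauss2 T = gaussianReal 0 1 (Set.Ioi w) := by
    rw [hT, ← Measure.map_apply hfmeas measurableSet_Ioi, map_proj_gauss2 a b h]
  have hle : gauss2 S + gaussianReal 0 1 (Set.Ioi w) ≤ 1 := by
    rw [← hTval, ← hunion]
    exact prob_le_one
  have h2 := ENNReal.toReal_mono ENNReal.one_ne_top hle
  rwa [ENNReal.toReal_add (measure_ne_top _ _) (measure_ne_top _ _), ENNReal.toReal_one] at h2

/-- There is a universal constant `c > 0` such that for `0 < τ < 2`, `α = 1 - τ²/2`,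
`β = √(τ² - τ⁴/4)`, all `u, v` with `u ≥ 0` and `αu + βv ≥ 0`, and all `0 < ε < 1/3`:
`1 - e^{-Δ(u,v)²/2} ≤ σ(u,v) ≤ 1 - c ε^{1/2} e^{-(1+ε)Δ(u,v)²/2}`
where `Δ(u,v) = min(u, αu + βv)`. -/
theorem sigma_bounds :
    ∃ c : ℝ, 0 < c ∧
      ∀ τ α β : ℝ, 0 < τ → τ < 2 →
        α = 1 - τ ^ 2 / 2 → β = Real.sqrt (τ ^ 2 - τ ^ 4 / 4) →
        ∀ u v : ℝ, 0 ≤ u → 0 ≤ α * u + β * v →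
          ∀ ε : ℝ, 0 < ε → ε < 1 / 3 →
            1 - Real.exp (-(min u (α * u + β * v)) ^ 2 / 2) ≤ sigmaProb α β u v ∧
              sigmaProb α β u v
                ≤ 1 - c * Real.sqrt ε
                    * Real.exp (-((1 + ε) * (min u (α * u + β * v)) ^ 2) / 2) := by
  refine ⟨1/20, by norm_num, ?_⟩
  intro τ α β hτ0 hτ2 hα hβ u v hu hw ε hε hε3
  have hαβ : α ^ 2 + β ^ 2 = 1 := by
    have harg : 0 ≤ τ ^ 2 - τ ^ 4 / 4 := by
      have h4 : τ ^ 2 ≤ 4 := by nlinarith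
      nlinarith [mul_nonneg (mul_pos hτ0 hτ0).le (by linarith : (0:ℝ) ≤ 4 - τ ^ 2)]
    have hβ2 : β ^ 2 = τ ^ 2 - τ ^ 4 / 4 := by rw [hβ, Real.sq_sqrt harg]
    rw [hα, hβ2]; ring
  set w := α * u + β * v with hwdef
  set Δ := min u w with hΔdef
  have hΔ0 : 0 ≤ Δ := le_min hu hw
  have hΔu : Δ ≤ u := min_le_left _ _
  have hΔw : Δ ≤ w := min_le_right _ _
  set S := {z : ℝ × ℝ | |z.1| ≤ u ∧ |α * z.1 + β * z.2| ≤ w} with hSdef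
  constructor
  · -- lower bound
    have hsub : {p : ℝ × ℝ | p.1 ^ 2 + p.2 ^ 2 ≤ Δ ^ 2} ⊆ S := by
      intro p hp
      simp only [Set.mem_setOf_eq] at hp ⊢
      have h1 : p.1 ^ 2 ≤ Δ ^ 2 := by nlinarith [sq_nonneg p.2]
      have h2 : (α * p.1 + β * p.2) ^ 2 ≤ Δ ^ 2 := by
        nlinarith [sq_nonneg (β * p.1 - α * p.2)]
      constructor
      · have : |p.1| ≤ Δ := by nlinarith [abs_nonneg p.1, sq_abs p.1]
        linarith
      · have : |α * p.1 + β * p.2| ≤ Δ := by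
          nlinarith [abs_nonneg (α * p.1 + β * p.2), sq_abs (α * p.1 + β * p.2)]
        linarith
    have hchain : ENNReal.ofReal (1 - Real.exp (-Δ^2/2)) ≤ gauss2 S :=
      le_trans (disk_lb Δ hΔ0) (measure_mono hsub)
    have := ENNReal.toReal_mono (measure_ne_top _ _) hchain
    rw [ENNReal.toReal_ofReal (by
      have : Real.exp (-Δ^2/2) ≤ 1 := Real.exp_le_one_iff.2 (by nlinarith [sq_nonneg Δ])
      linarith)] at this
    exact this
  · -- upper bound
    have hkey := tail_key Δ ε hΔ0 hε hε3
    rcases le_total u w with hc | hc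
    · have hΔeq : Δ = u := min_eq_left hc
      have hsum := gauss2_add_tail_fst α β u w
      rw [show Set.Ioi Δ = Set.Ioi u from by rw [hΔeq]] at hkey
      unfold sigmaProb
      rw [← hwdef, ← hSdef]
      linarith
    · have hΔeq : Δ = w := min_eq_right hc
      have hsum := gauss2_add_tail_snd α β u w hαβ
      rw [show Set.Ioi Δ = Set.Ioi w from by rw [hΔeq]] at hkey
      unfold sigmaProb
      rw [← hwdef, ← hSdef]
      linarith
end
end
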